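/- Let (φᵢ)_{i≥1} be an orthonormal family in L²([0,1]) with Lebesgue measure, let (ωᵢ) be real numbers with ∑_{i=1}^{∞} |ωᵢ| < ∞ and ∑_{i=1}^{∞} ωᵢ² < ∞, and let W : [0,1]² → ℝ be measurable with 0 ≤ W ≤ 1, such that: (i) the partial sums ∑_{i=1}^{m} ωᵢ φᵢ(x)φᵢ(y) converge to W in L²([0,1]²) as m → ∞; (ii) for almost every x ∈ [0,1], ∑_{i=1}^{∞} ωᵢ φᵢ(x)² converges and equals W(x,x); and (iii) there is B ≥ 0 such that for every k, the function x ↦ ∑_{i=k+1}^{∞} ωᵢ φᵢ(x)² lies in L²([0,1]) with L² norm at most B. Let ξ₁, …, ξₙ be i.i.d. uniform random variables on [0,1], let M be the random n×n matrix with M_{uv} = W(ξ_u, ξ_v) for u ≠ v and M_{uu} = 0, and let N be the random n×n matrix with N_{uv} = ∑_{i=1}^{k} ωᵢ φᵢ(ξ_u)φᵢ(ξ_v) for all u, v. Then E[‖M − N‖_F²] ≤ 2 n² ∑_{i=k+1}^{∞} ωᵢ² + n (2 ∑_{i=1}^{∞} |ωᵢ| + 2B²). -/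

import Mathlib

open MeasureTheory

/-- The uniform distribution on `[0,1]`. -/
noncomputable def unifMeasure : Measure ℝ := volume.restrict (Set.Icc (0:ℝ) 1)

lemma unifMeasure_def : unifMeasure = volume.restrict (Set.Icc (0:ℝ) 1) := rfl

instance : IsProbabilityMeasure unifMeasure := by
  constructor
  simp [unifMeasure, Real.volume_Icc]

lemma integrable_mul_L2 {α : Type*} [MeasurableSpace α] {μ : Measure α} {f g : α → ℝ}
    (hf : MemLp f 2 μ) (hg : MemLp g 2 μ) :
    Integrable (fun x => f x * g x) μ := by
  refine Integrable.mono' ((hf.integrable_sq.add hg.integrable_sq).div_const 2)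
    (hf.1.mul hg.1) (Filter.Eventually.of_forall fun x => ?_)
  rw [Real.norm_eq_abs, abs_mul]
  show |f x| * |g x| ≤ (f x ^ 2 + g x ^ 2) / 2
  nlinarith [sq_nonneg (|f x| - |g x|), sq_abs (f x), sq_abs (g x), abs_nonneg (f x),
    abs_nonneg (g x)]

lemma unif_eval_mp (n : ℕ) (u : Fin n) :
    MeasurePreserving (fun ξ : Fin n → ℝ => ξ u)
      (Measure.pi fun _ : Fin n => unifMeasure) unifMeasure := by
  refine ⟨measurable_pi_apply u, ?_⟩
  refine Measure.ext fun s hs => ?_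
  rw [Measure.map_apply (measurable_pi_apply u) hs, Set.eval_preimage,
    Measure.pi_pi]
  have h : ∀ j, unifMeasure (Function.update (fun _ => Set.univ) u s j)
      = Function.update (fun _ : Fin n => (1:ENNReal)) u (unifMeasure s) j := by
    intro j
    rcases eq_or_ne j u with rfl | hj
    · simp
    · simp [Function.update_of_ne hj]
  simp only [h]
  rw [Finset.prod_update_of_mem (Finset.mem_univ u)]
  simp

lemma unif_pair_mp (n : ℕ) {u v : Fin n} (huv : u ≠ v) :
    MeasurePreserving (fun ξ : Fin n → ℝ => (ξ u, ξ v))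
      (Measure.pi fun _ : Fin n => unifMeasure) (unifMeasure.prod unifMeasure) := by
  refine ⟨(measurable_pi_apply u).prodMk (measurable_pi_apply v), ?_⟩
  refine (Measure.prod_eq fun s t hs ht => ?_).symm
  rw [Measure.map_apply ((measurable_pi_apply u).prodMk (measurable_pi_apply v)) (hs.prod ht)]
  have : (fun ξ : Fin n → ℝ => (ξ u, ξ v)) ⁻¹' (s ×ˢ t) =
      Set.pi Set.univ (Function.update (Function.update (fun _ => Set.univ) u s) v t) := by
    ext ξ
    simp only [Set.mem_preimage, Set.mem_prod, Set.mem_pi, Set.mem_univ, true_implies]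
    constructor
    · rintro ⟨h1, h2⟩ j
      rcases eq_or_ne j v with rfl | hjv
      · simpa [Function.update_self]
      rcases eq_or_ne j u with rfl | hju
      · simpa [Function.update_of_ne hjv, Function.update_self]
      · simp [Function.update_of_ne hjv, Function.update_of_ne hju]
    · intro h
      refine ⟨?_, ?_⟩
      · have := h u
        simpa [Function.update_of_ne huv, Function.update_self] using this
      · have := h v
        simpa [Function.update_self] using this
  rw [this, Measure.pi_pi]
  have h : ∀ j, unifMeasure (Function.update (Function.update (fun _ => Set.univ) u s) v t j)
      = Function.update (Function.update (fun _ : Fin n => (1:ENNReal)) u (unifMeasure s)) v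
          (unifMeasure t) j := by
    intro j
    rcases eq_or_ne j v with rfl | hjv
    · simp
    rcases eq_or_ne j u with rfl | hju
    · simp [Function.update_of_ne hjv]
    · simp [Function.update_of_ne hjv, Function.update_of_ne hju]
  simp only [h]
  rw [Finset.prod_update_of_mem (Finset.mem_univ v)]
  rw [Finset.prod_update_of_mem
    (Finset.mem_sdiff.2 ⟨Finset.mem_univ u, by simp [huv]⟩)]
  simp [mul_comm]

lemma diag_bound (k : ℕ) (φ : ℕ → ℝ → ℝ) (ω : ℕ → ℝ) (W : ℝ → ℝ → ℝ) (B : ℝ)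
    (hφmem : ∀ i, MemLp (φ i) 2 unifMeasure)
    (horth : ∀ i j, (∫ x in Set.Icc (0:ℝ) 1, φ i x * φ j x) =
      if i = j then (1:ℝ) else 0)
    (hω1 : Summable fun i => |ω i|)
    (hWmeas : Measurable (Function.uncurry W))
    (hW01 : ∀ x y, 0 ≤ W x y ∧ W x y ≤ 1)
    (hdiag : ∀ᵐ x ∂unifMeasure, HasSum (fun i => ω i * (φ i x) ^ 2) (W x x))
    (htail : MemLp (fun x => ∑' i : {i : ℕ // k ≤ i}, ω i * (φ i x) ^ 2) 2 unifMeasure ∧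
      (∫ x in Set.Icc (0:ℝ) 1, (∑' i : {i : ℕ // k ≤ i}, ω i * (φ i x) ^ 2) ^ 2) ≤ B ^ 2) :
    Integrable (fun x => (∑ i ∈ Finset.range k, ω i * φ i x * φ i x)^2) unifMeasure ∧
    (∫ x, (∑ i ∈ Finset.range k, ω i * φ i x * φ i x)^2 ∂unifMeasure)
      ≤ 2 * (∑' i, |ω i|) + 2 * B ^ 2 := by
  have hWdmeas : Measurable fun x => W x x :=
    hWmeas.comp (measurable_id.prodMk measurable_id)
  -- a.e. identity for the partial sum
  have hdiag_sum : ∀ᵐ x ∂unifMeasure,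
      (∑ i ∈ Finset.range k, ω i * φ i x * φ i x)
        = W x x - ∑' i : {i : ℕ // k ≤ i}, ω i * (φ i x) ^ 2 := by
    filter_upwards [hdiag] with x hx
    have h1 := Summable.sum_add_tsum_subtype_compl hx.summable (Finset.range k)
    rw [hx.tsum_eq] at h1
    have h2 : (∑' i : {i : ℕ // i ∉ Finset.range k}, ω i * (φ i x) ^ 2)
        = ∑' i : {i : ℕ // k ≤ i}, ω i * (φ i x) ^ 2 := by
      exact ((Equiv.subtypeEquivRight (fun i => by
        simp [Finset.mem_range, not_lt])).tsum_eq
        (fun i : {i : ℕ // k ≤ i} => ω i * (φ i x) ^ 2))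
    rw [h2] at h1
    have h3 : (∑ i ∈ Finset.range k, ω i * φ i x * φ i x)
        = ∑ i ∈ Finset.range k, ω i * (φ i x) ^ 2 :=
      Finset.sum_congr rfl fun i _ => by ring
    linarith
  -- integrability of W(x,x) and its square
  have hWd_int : Integrable (fun x => W x x) unifMeasure := by
    refine Integrable.mono' (integrable_const 1) hWdmeas.aestronglyMeasurable
      (Filter.Eventually.of_forall fun x => ?_)
    rw [Real.norm_eq_abs, abs_of_nonneg (hW01 x x).1]
    exact (hW01 x x).2
  have hWd2_int : Integrable (fun x => (W x x)^2) unifMeasure := by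
    refine Integrable.mono' (integrable_const 1) (hWdmeas.pow_const 2).aestronglyMeasurable
      (Filter.Eventually.of_forall fun x => ?_)
    rw [Real.norm_eq_abs, abs_of_nonneg (sq_nonneg _)]
    nlinarith [(hW01 x x).1, (hW01 x x).2]
  have hT2_int : Integrable
      (fun x => (∑' i : {i : ℕ // k ≤ i}, ω i * (φ i x) ^ 2) ^ 2) unifMeasure :=
    htail.1.integrable_sq
  -- ∫ W(x,x) ≤ ∑' |ω i|
  have hφsq_lint : ∀ i, (∫⁻ x, ENNReal.ofReal ((φ i x) ^ 2) ∂unifMeasure) = 1 := by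
    intro i
    have hi : Integrable (fun x => φ i x * φ i x) unifMeasure :=
      integrable_mul_L2 (hφmem i) (hφmem i)
    have h0 : 0 ≤ᵐ[unifMeasure] fun x => φ i x * φ i x :=
      Filter.Eventually.of_forall fun x => mul_self_nonneg _
    have h := ofReal_integral_eq_lintegral_ofReal hi h0
    have h2 : (∫ x, φ i x * φ i x ∂unifMeasure) = 1 := by
      rw [unifMeasure_def]
      simpa using horth i i
    rw [h2] at h
    simp only [pow_two]
    rw [← h, ENNReal.ofReal_one]
  have hWle : (∫ x, W x x ∂unifMeasure) ≤ ∑' i, |ω i| := by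
    have h1 : (∫ x, W x x ∂unifMeasure)
        = (∫⁻ x, ENNReal.ofReal (W x x) ∂unifMeasure).toReal :=
      integral_eq_lintegral_of_nonneg_ae (Filter.Eventually.of_forall fun x => (hW01 x x).1)
        hWdmeas.aestronglyMeasurable
    have h2 : (∫⁻ x, ENNReal.ofReal (W x x) ∂unifMeasure)
        ≤ ENNReal.ofReal (∑' i, |ω i|) := by
      have hstep : (∫⁻ x, ENNReal.ofReal (W x x) ∂unifMeasure)
          ≤ ∫⁻ x, ∑' i, ENNReal.ofReal (|ω i|) * ENNReal.ofReal ((φ i x) ^ 2) ∂unifMeasure := by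
        refine lintegral_mono_ae (hdiag.mono fun x hx => ?_)
        refine le_of_tendsto ((ENNReal.continuous_ofReal.tendsto _).comp
          hx.tendsto_sum_nat) ?_
        refine Filter.Eventually.of_forall fun m => ?_
        calc ENNReal.ofReal (∑ i ∈ Finset.range m, ω i * (φ i x) ^ 2)
            ≤ ENNReal.ofReal (∑ i ∈ Finset.range m, |ω i| * (φ i x) ^ 2) := by
              apply ENNReal.ofReal_le_ofReal
              exact Finset.sum_le_sum fun i _ =>
                mul_le_mul_of_nonneg_right (le_abs_self _) (sq_nonneg _)
          _ = ∑ i ∈ Finset.range m, ENNReal.ofReal (|ω i| * (φ i x) ^ 2) :=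
              ENNReal.ofReal_sum_of_nonneg fun i _ =>
                mul_nonneg (abs_nonneg _) (sq_nonneg _)
          _ = ∑ i ∈ Finset.range m, ENNReal.ofReal (|ω i|) * ENNReal.ofReal ((φ i x) ^ 2) :=
              Finset.sum_congr rfl fun i _ => ENNReal.ofReal_mul (abs_nonneg _)
          _ ≤ ∑' i, ENNReal.ofReal (|ω i|) * ENNReal.ofReal ((φ i x) ^ 2) :=
              ENNReal.sum_le_tsum _
      have hswap : (∫⁻ x, ∑' i, ENNReal.ofReal (|ω i|) * ENNReal.ofReal ((φ i x) ^ 2)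
            ∂unifMeasure)
          = ∑' i, ENNReal.ofReal (|ω i|) * (∫⁻ x, ENNReal.ofReal ((φ i x) ^ 2) ∂unifMeasure) := by
        rw [lintegral_tsum fun i =>
          ((((hφmem i).1.aemeasurable).pow_const 2).ennreal_ofReal.const_mul _)]
        exact tsum_congr fun i => lintegral_const_mul' _ _ ENNReal.ofReal_ne_top
      calc (∫⁻ x, ENNReal.ofReal (W x x) ∂unifMeasure)
          ≤ _ := hstep
        _ = ∑' i, ENNReal.ofReal (|ω i|) := by
            rw [hswap]; simp [hφsq_lint]
        _ = ENNReal.ofReal (∑' i, |ω i|) :=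
            (ENNReal.ofReal_tsum_of_nonneg (fun i => abs_nonneg _) hω1).symm
    rw [h1]
    calc (∫⁻ x, ENNReal.ofReal (W x x) ∂unifMeasure).toReal
        ≤ (ENNReal.ofReal (∑' i, |ω i|)).toReal :=
          ENNReal.toReal_mono ENNReal.ofReal_ne_top h2
      _ ≤ ∑' i, |ω i| := le_of_eq (ENNReal.toReal_ofReal (tsum_nonneg fun i => abs_nonneg _))
  -- a.e. bound on the square of the partial sum
  have hbound : ∀ᵐ x ∂unifMeasure,
      (∑ i ∈ Finset.range k, ω i * φ i x * φ i x)^2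
        ≤ 2 * (W x x)^2 + 2 * (∑' i : {i : ℕ // k ≤ i}, ω i * (φ i x) ^ 2) ^ 2 := by
    filter_upwards [hdiag_sum] with x hx
    rw [hx]
    nlinarith [sq_nonneg (W x x + ∑' i : {i : ℕ // k ≤ i}, ω i * (φ i x) ^ 2)]
  have hrhs_int : Integrable (fun x => 2 * (W x x)^2
      + 2 * (∑' i : {i : ℕ // k ≤ i}, ω i * (φ i x) ^ 2) ^ 2) unifMeasure :=
    (hWd2_int.const_mul 2).add (hT2_int.const_mul 2)
  have hD_aesm : AEStronglyMeasurable
      (fun x => (∑ i ∈ Finset.range k, ω i * φ i x * φ i x)^2) unifMeasure := by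
    refine AEStronglyMeasurable.pow ?_ _
    exact Finset.aestronglyMeasurable_fun_sum _ fun i _ =>
      (((hφmem i).1.const_mul (ω i)).mul (hφmem i).1)
  have hD2_int : Integrable
      (fun x => (∑ i ∈ Finset.range k, ω i * φ i x * φ i x)^2) unifMeasure := by
    refine Integrable.mono' hrhs_int hD_aesm ?_
    filter_upwards [hbound] with x hx
    rw [Real.norm_eq_abs, abs_of_nonneg (sq_nonneg _)]
    exact hx
  refine ⟨hD2_int, ?_⟩
  have hT2B : (∫ x, (∑' i : {i : ℕ // k ≤ i}, ω i * (φ i x) ^ 2) ^ 2 ∂unifMeasure) ≤ B^2 := by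
    rw [unifMeasure_def]
    simpa using htail.2
  have hW2W : (∫ x, (W x x)^2 ∂unifMeasure) ≤ ∫ x, W x x ∂unifMeasure := by
    refine integral_mono hWd2_int hWd_int fun x => ?_
    nlinarith [(hW01 x x).1, (hW01 x x).2]
  calc (∫ x, (∑ i ∈ Finset.range k, ω i * φ i x * φ i x)^2 ∂unifMeasure)
      ≤ ∫ x, (2 * (W x x)^2
          + 2 * (∑' i : {i : ℕ // k ≤ i}, ω i * (φ i x) ^ 2) ^ 2) ∂unifMeasure :=
        integral_mono_of_nonneg (Filter.Eventually.of_forall fun x => sq_nonneg _)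
          hrhs_int hbound
    _ = 2 * (∫ x, (W x x)^2 ∂unifMeasure)
        + 2 * ∫ x, (∑' i : {i : ℕ // k ≤ i}, ω i * (φ i x) ^ 2) ^ 2 ∂unifMeasure := by
        rw [integral_add (hWd2_int.const_mul 2) (hT2_int.const_mul 2),
          integral_const_mul, integral_const_mul]
    _ ≤ 2 * (∑' i, |ω i|) + 2 * B ^ 2 := by
        have := hWle
        nlinarith [hW2W, hT2B]

lemma offdiag_bound (k : ℕ) (φ : ℕ → ℝ → ℝ) (ω : ℕ → ℝ) (W : ℝ → ℝ → ℝ)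
    (hφmem : ∀ i, MemLp (φ i) 2 unifMeasure)
    (horth : ∀ i j, (∫ x in Set.Icc (0:ℝ) 1, φ i x * φ j x) =
      if i = j then (1:ℝ) else 0)
    (hω2 : Summable fun i => (ω i) ^ 2)
    (hWmeas : Measurable (Function.uncurry W))
    (hW01 : ∀ x y, 0 ≤ W x y ∧ W x y ≤ 1)
    (hL2conv : Filter.Tendsto
      (fun m => ∫ x in Set.Icc (0:ℝ) 1, ∫ y in Set.Icc (0:ℝ) 1,
        (W x y - ∑ i ∈ Finset.range m, ω i * φ i x * φ i y) ^ 2)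
      Filter.atTop (nhds 0)) :
    Integrable (fun p : ℝ × ℝ =>
        (W p.1 p.2 - ∑ i ∈ Finset.range k, ω i * φ i p.1 * φ i p.2) ^ 2)
      (unifMeasure.prod unifMeasure) ∧
    (∫ p, (W p.1 p.2 - ∑ i ∈ Finset.range k, ω i * φ i p.1 * φ i p.2) ^ 2
        ∂(unifMeasure.prod unifMeasure))
      ≤ 2 * ∑' i : {i : ℕ // k ≤ i}, (ω i) ^ 2 := by
  set ν := unifMeasure.prod unifMeasure with hν
  have hφν : ∀ i, MemLp (fun p : ℝ × ℝ => φ i p.1 * φ i p.2) 2 ν := by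
    intro i
    have haesm : AEStronglyMeasurable (fun p : ℝ × ℝ => φ i p.1 * φ i p.2) ν :=
      ((hφmem i).1.comp_quasiMeasurePreserving Measure.quasiMeasurePreserving_fst).mul
        ((hφmem i).1.comp_quasiMeasurePreserving Measure.quasiMeasurePreserving_snd)
    rw [memLp_two_iff_integrable_sq haesm]
    have h := Integrable.mul_prod (μ := unifMeasure) (ν := unifMeasure)
      (hφmem i).integrable_sq (hφmem i).integrable_sq
    simpa [mul_pow] using h
  have hSν : ∀ m, MemLp (fun p : ℝ × ℝ =>
      ∑ i ∈ Finset.range m, ω i * φ i p.1 * φ i p.2) 2 ν := by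
    intro m
    apply memLp_finset_sum
    intro i _
    have h := (hφν i).const_mul (ω i)
    simpa [mul_assoc] using h
  have hWν : MemLp (fun p : ℝ × ℝ => W p.1 p.2) 2 ν := by
    refine MemLp.of_bound hWmeas.aestronglyMeasurable 1
      (Filter.Eventually.of_forall fun p => ?_)
    rw [Real.norm_eq_abs, abs_of_nonneg (hW01 p.1 p.2).1]
    exact (hW01 p.1 p.2).2
  have horthμ : ∀ i j, (∫ x, φ i x * φ j x ∂unifMeasure) = if i = j then (1:ℝ) else 0 := by
    intro i j
    rw [unifMeasure_def]
    simpa using horth i j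
  have hterm_int : ∀ i j, Integrable (fun p : ℝ × ℝ =>
      (ω i * φ i p.1 * φ i p.2) * (ω j * φ j p.1 * φ j p.2)) ν := by
    intro i j
    have h := (Integrable.mul_prod (μ := unifMeasure) (ν := unifMeasure)
      (integrable_mul_L2 (hφmem i) (hφmem j))
      (integrable_mul_L2 (hφmem i) (hφmem j))).const_mul (ω i * ω j)
    have heq : (fun p : ℝ × ℝ => (ω i * ω j) * ((φ i p.1 * φ j p.1) * (φ i p.2 * φ j p.2)))
        = fun p : ℝ × ℝ => (ω i * φ i p.1 * φ i p.2) * (ω j * φ j p.1 * φ j p.2) := by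
      funext p; ring
    rwa [heq] at h
  have hterm_val : ∀ i j, (∫ p, (ω i * φ i p.1 * φ i p.2) * (ω j * φ j p.1 * φ j p.2) ∂ν)
      = if i = j then ω i ^ 2 else 0 := by
    intro i j
    have heq : (fun p : ℝ × ℝ => (ω i * φ i p.1 * φ i p.2) * (ω j * φ j p.1 * φ j p.2))
        = fun p : ℝ × ℝ => (ω i * ω j) * ((φ i p.1 * φ j p.1) * (φ i p.2 * φ j p.2)) := by
      funext p; ring
    rw [heq]
    rw [integral_const_mul]
    rw [show (fun p : ℝ × ℝ => (φ i p.1 * φ j p.1) * (φ i p.2 * φ j p.2))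
      = fun p : ℝ × ℝ => (fun x => φ i x * φ j x) p.1 * (fun y => φ i y * φ j y) p.2 from rfl]
    rw [integral_prod_mul (μ := unifMeasure) (ν := unifMeasure)
      (fun x => φ i x * φ j x) (fun y => φ i y * φ j y)]
    rw [horthμ i j]
    by_cases hij : i = j
    · subst hij; simp [pow_two]
    · simp [hij]
  have hIcoval : ∀ m, k ≤ m → (∫ p,
      ((∑ i ∈ Finset.range m, ω i * φ i p.1 * φ i p.2)
        - ∑ i ∈ Finset.range k, ω i * φ i p.1 * φ i p.2) ^ 2 ∂ν)
      = ∑ i ∈ Finset.Ico k m, ω i ^ 2 := by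
    intro m hkm
    have hdiff : ∀ p : ℝ × ℝ,
        ((∑ i ∈ Finset.range m, ω i * φ i p.1 * φ i p.2)
          - ∑ i ∈ Finset.range k, ω i * φ i p.1 * φ i p.2)
        = ∑ i ∈ Finset.Ico k m, ω i * φ i p.1 * φ i p.2 := fun p =>
      (Finset.sum_Ico_eq_sub _ hkm).symm
    have hsq : ∀ p : ℝ × ℝ,
        ((∑ i ∈ Finset.range m, ω i * φ i p.1 * φ i p.2)
          - ∑ i ∈ Finset.range k, ω i * φ i p.1 * φ i p.2) ^ 2
        = ∑ i ∈ Finset.Ico k m, ∑ j ∈ Finset.Ico k m,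
            (ω i * φ i p.1 * φ i p.2) * (ω j * φ j p.1 * φ j p.2) := by
      intro p
      rw [hdiff p, pow_two, Finset.sum_mul_sum]
    simp only [hsq]
    rw [integral_finset_sum _ (fun i _ =>
      integrable_finset_sum _ (fun j _ => hterm_int i j))]
    have : ∀ i ∈ Finset.Ico k m,
        (∫ p, ∑ j ∈ Finset.Ico k m,
          (ω i * φ i p.1 * φ i p.2) * (ω j * φ j p.1 * φ j p.2) ∂ν)
        = ∑ j ∈ Finset.Ico k m,
            if i = j then ω i ^ 2 else 0 := by
      intro i _
      rw [integral_finset_sum _ (fun j _ => hterm_int i j)]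
      exact Finset.sum_congr rfl fun j _ => hterm_val i j
    rw [Finset.sum_congr rfl this]
    exact Finset.sum_congr rfl fun i hi => by
      rw [Finset.sum_ite_eq (Finset.Ico k m) i (fun _ => ω i ^ 2)]
      simp [hi]
  have hIcoleT : ∀ m, (∑ i ∈ Finset.Ico k m, ω i ^ 2)
      ≤ ∑' i : {i : ℕ // k ≤ i}, (ω i) ^ 2 := by
    intro m
    have hsub : Summable (fun i : {i : ℕ // k ≤ i} => (ω i) ^ 2) :=
      hω2.subtype {i : ℕ | k ≤ i}
    have hle := Summable.sum_le_tsum ((Finset.Ico k m).subtype fun i => k ≤ i)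
      (fun i _ => sq_nonneg (ω i)) hsub
    have h2 : (∑ i ∈ (Finset.Ico k m).subtype fun i => k ≤ i, ω (i : ℕ) ^ 2)
        = ∑ i ∈ (Finset.Ico k m).filter (fun i => k ≤ i), ω i ^ 2 :=
      Finset.sum_subtype_eq_sum_filter (fun n : ℕ => ω n ^ 2)
    rw [h2, Finset.filter_true_of_mem (fun i hi => (Finset.mem_Ico.1 hi).1)] at hle
    exact hle
  have hSq_int : ∀ m, Integrable (fun p : ℝ × ℝ =>
      (W p.1 p.2 - ∑ i ∈ Finset.range m, ω i * φ i p.1 * φ i p.2) ^ 2) ν :=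
    fun m => (hWν.sub (hSν m)).integrable_sq
  refine ⟨hSq_int k, ?_⟩
  have hiter : ∀ m, (∫ p, (W p.1 p.2 - ∑ i ∈ Finset.range m, ω i * φ i p.1 * φ i p.2) ^ 2 ∂ν)
      = ∫ x in Set.Icc (0:ℝ) 1, ∫ y in Set.Icc (0:ℝ) 1,
          (W x y - ∑ i ∈ Finset.range m, ω i * φ i x * φ i y) ^ 2 := by
    intro m
    rw [hν, integral_prod _ (hSq_int m)]
    rw [unifMeasure_def]
  have htendsν : Filter.Tendsto
      (fun m => ∫ p, (W p.1 p.2 - ∑ i ∈ Finset.range m, ω i * φ i p.1 * φ i p.2) ^ 2 ∂ν)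
      Filter.atTop (nhds 0) := by
    simp only [hiter]
    exact hL2conv
  have hmono : ∀ m, k ≤ m →
      (∫ p, (W p.1 p.2 - ∑ i ∈ Finset.range k, ω i * φ i p.1 * φ i p.2) ^ 2 ∂ν)
      ≤ 2 * (∫ p, (W p.1 p.2 - ∑ i ∈ Finset.range m, ω i * φ i p.1 * φ i p.2) ^ 2 ∂ν)
        + 2 * ∑' i : {i : ℕ // k ≤ i}, (ω i) ^ 2 := by
    intro m hkm
    have hSmSk_int : Integrable (fun p : ℝ × ℝ =>
        ((∑ i ∈ Finset.range m, ω i * φ i p.1 * φ i p.2)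
          - ∑ i ∈ Finset.range k, ω i * φ i p.1 * φ i p.2) ^ 2) ν :=
      ((hSν m).sub (hSν k)).integrable_sq
    have h1 : (∫ p, (W p.1 p.2 - ∑ i ∈ Finset.range k, ω i * φ i p.1 * φ i p.2) ^ 2 ∂ν)
        ≤ ∫ p, (2 * (W p.1 p.2 - ∑ i ∈ Finset.range m, ω i * φ i p.1 * φ i p.2) ^ 2
            + 2 * ((∑ i ∈ Finset.range m, ω i * φ i p.1 * φ i p.2)
              - ∑ i ∈ Finset.range k, ω i * φ i p.1 * φ i p.2) ^ 2) ∂ν := by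
      refine integral_mono_of_nonneg (Filter.Eventually.of_forall fun p => sq_nonneg _)
        (((hSq_int m).const_mul 2).add (hSmSk_int.const_mul 2))
        (Filter.Eventually.of_forall fun p => ?_)
      dsimp only
      nlinarith [sq_nonneg ((W p.1 p.2 - ∑ i ∈ Finset.range m, ω i * φ i p.1 * φ i p.2)
        - ((∑ i ∈ Finset.range m, ω i * φ i p.1 * φ i p.2)
          - ∑ i ∈ Finset.range k, ω i * φ i p.1 * φ i p.2))]
    rw [integral_add ((hSq_int m).const_mul 2) (hSmSk_int.const_mul 2),
      integral_const_mul, integral_const_mul, hIcoval m hkm] at h1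
    refine h1.trans ?_
    have := hIcoleT m
    nlinarith
  refine ge_of_tendsto (((htendsν.const_mul 2).add_const
    (2 * ∑' i : {i : ℕ // k ≤ i}, (ω i) ^ 2)).mono_right ?_) ?_
  · rw [show (2:ℝ) * 0 + 2 * ∑' i : {i : ℕ // k ≤ i}, (ω i) ^ 2
      = 2 * ∑' i : {i : ℕ // k ≤ i}, (ω i) ^ 2 by ring]
  · exact Filter.eventually_atTop.2 ⟨k, fun m hm => hmono m hm⟩


/-- Let `(φ i)_{i ∈ ℕ}` be an orthonormal family in `L²([0,1])`
(the family `(φᵢ)_{i ≥ 1}` of the paper, reindexed from `0`), `(ω i)` reals with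
`∑ |ω i| < ∞` and `∑ (ω i)² < ∞`, and `W : [0,1]² → ℝ` measurable with `0 ≤ W ≤ 1`, such that:
(i) the partial sums `∑_{i<m} ω i φ i x φ i y` converge to `W` in `L²([0,1]²)`;
(ii) for a.e. `x`, `∑ i, ω i (φ i x)²` converges to `W x x`;
(iii) there is `B ≥ 0` so that for every `k'` the tail `x ↦ ∑_{i ≥ k'} ω i (φ i x)²`
is in `L²([0,1])` with norm at most `B`.
Let `ξ₁, …, ξₙ` be i.i.d. uniform on `[0,1]` (modeled by the product measure),
`M` the random matrix with `M u v = W (ξ u) (ξ v)` off the diagonal and `0` on it, and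
`N u v = ∑_{i<k} ω i φ i (ξ u) φ i (ξ v)` (the first `k` terms). Then
`E ‖M - N‖_F² ≤ 2 n² ∑_{i ≥ k} (ω i)² + n (2 ∑ᵢ |ω i| + 2 B²)`. -/
theorem expected_frobenius_low_rank_approx
    (n k : ℕ)
    (φ : ℕ → ℝ → ℝ) (ω : ℕ → ℝ) (W : ℝ → ℝ → ℝ) (B : ℝ)
    (hφmem : ∀ i, MemLp (φ i) 2 unifMeasure)
    (horth : ∀ i j, (∫ x in Set.Icc (0:ℝ) 1, φ i x * φ j x) =
      if i = j then (1:ℝ) else 0)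
    (hω1 : Summable fun i => |ω i|)
    (hω2 : Summable fun i => (ω i) ^ 2)
    (hWmeas : Measurable (Function.uncurry W))
    (hW01 : ∀ x y, 0 ≤ W x y ∧ W x y ≤ 1)
    (hL2conv : Filter.Tendsto
      (fun m => ∫ x in Set.Icc (0:ℝ) 1, ∫ y in Set.Icc (0:ℝ) 1,
        (W x y - ∑ i ∈ Finset.range m, ω i * φ i x * φ i y) ^ 2)
      Filter.atTop (nhds 0))
    (hdiag : ∀ᵐ x ∂unifMeasure, HasSum (fun i => ω i * (φ i x) ^ 2) (W x x))
    (hB : 0 ≤ B)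
    (htail : ∀ k' : ℕ,
      MemLp (fun x => ∑' i : {i : ℕ // k' ≤ i}, ω i * (φ i x) ^ 2) 2 unifMeasure ∧
      (∫ x in Set.Icc (0:ℝ) 1, (∑' i : {i : ℕ // k' ≤ i}, ω i * (φ i x) ^ 2) ^ 2) ≤ B ^ 2) :
    (∫ ξ : Fin n → ℝ,
        (∑ u, ∑ v,
          ((if u = v then (0:ℝ) else W (ξ u) (ξ v))
            - ∑ i ∈ Finset.range k, ω i * φ i (ξ u) * φ i (ξ v)) ^ 2)
        ∂(Measure.pi fun _ : Fin n => unifMeasure))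
      ≤ 2 * (n : ℝ) ^ 2 * (∑' i : {i : ℕ // k ≤ i}, (ω i) ^ 2)
        + n * (2 * (∑' i, |ω i|) + 2 * B ^ 2) := by
  obtain ⟨hoff_int, hoff_le⟩ := offdiag_bound k φ ω W hφmem horth hω2 hWmeas hW01 hL2conv
  obtain ⟨hdiag_int, hdiag_le⟩ :=
    diag_bound k φ ω W B hφmem horth hω1 hWmeas hW01 hdiag (htail k)
  set π : Measure (Fin n → ℝ) := Measure.pi fun _ : Fin n => unifMeasure with hπ
  set Co : ℝ := 2 * ∑' i : {i : ℕ // k ≤ i}, (ω i) ^ 2 with hCo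
  set Cd : ℝ := 2 * (∑' i, |ω i|) + 2 * B ^ 2 with hCd
  have hCo0 : 0 ≤ Co := by
    rw [hCo]
    have : (0:ℝ) ≤ ∑' i : {i : ℕ // k ≤ i}, (ω i) ^ 2 :=
      tsum_nonneg fun i => sq_nonneg _
    linarith
  -- integrability of each term
  have hterm_int : ∀ u v : Fin n, Integrable (fun ξ : Fin n → ℝ =>
      ((if u = v then (0:ℝ) else W (ξ u) (ξ v))
        - ∑ i ∈ Finset.range k, ω i * φ i (ξ u) * φ i (ξ v)) ^ 2) π := by
    intro u v
    by_cases huv : u = v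
    · subst huv
      simp only [eq_self_iff_true, if_true]
      have heq : (fun ξ : Fin n → ℝ =>
          ((0:ℝ) - ∑ i ∈ Finset.range k, ω i * φ i (ξ u) * φ i (ξ u)) ^ 2)
          = (fun x : ℝ => (∑ i ∈ Finset.range k, ω i * φ i x * φ i x) ^ 2)
            ∘ (fun ξ : Fin n → ℝ => ξ u) := by
        funext ξ
        simp [Function.comp, zero_sub, neg_sq]
      rw [heq]
      refine (integrable_map_measure ?_ (measurable_pi_apply u).aemeasurable).1 ?_
      · rw [(unif_eval_mp n u).map_eq]; exact hdiag_int.aestronglyMeasurable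
      · rw [(unif_eval_mp n u).map_eq]; exact hdiag_int
    · simp only [if_neg huv]
      have heq : (fun ξ : Fin n → ℝ =>
          (W (ξ u) (ξ v) - ∑ i ∈ Finset.range k, ω i * φ i (ξ u) * φ i (ξ v)) ^ 2)
          = (fun p : ℝ × ℝ =>
              (W p.1 p.2 - ∑ i ∈ Finset.range k, ω i * φ i p.1 * φ i p.2) ^ 2)
            ∘ (fun ξ : Fin n → ℝ => (ξ u, ξ v)) := rfl
      rw [heq]
      refine (integrable_map_measure ?_
        ((measurable_pi_apply u).prodMk (measurable_pi_apply v)).aemeasurable).1 ?_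
      · rw [(unif_pair_mp n huv).map_eq]; exact hoff_int.aestronglyMeasurable
      · rw [(unif_pair_mp n huv).map_eq]; exact hoff_int
  -- bound on each term
  have hterm_le : ∀ u v : Fin n, (∫ ξ,
      ((if u = v then (0:ℝ) else W (ξ u) (ξ v))
        - ∑ i ∈ Finset.range k, ω i * φ i (ξ u) * φ i (ξ v)) ^ 2 ∂π)
      ≤ if u = v then Cd else Co := by
    intro u v
    by_cases huv : u = v
    · subst huv
      simp only [eq_self_iff_true, if_true]
      have heq2 : (∫ ξ, ((0:ℝ)
          - ∑ i ∈ Finset.range k, ω i * φ i (ξ u) * φ i (ξ u)) ^ 2 ∂π)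
          = ∫ x, (∑ i ∈ Finset.range k, ω i * φ i x * φ i x) ^ 2 ∂unifMeasure := by
        rw [← (unif_eval_mp n u).map_eq,
          integral_map (measurable_pi_apply u).aemeasurable
            (by rw [(unif_eval_mp n u).map_eq]; exact hdiag_int.aestronglyMeasurable)]
        congr 1
        funext ξ
        rw [zero_sub, neg_sq]
      rw [heq2]
      exact hdiag_le
    · simp only [if_neg huv]
      have heq2 : (∫ ξ,
          (W (ξ u) (ξ v) - ∑ i ∈ Finset.range k, ω i * φ i (ξ u) * φ i (ξ v)) ^ 2 ∂π)
          = ∫ p, (W p.1 p.2 - ∑ i ∈ Finset.range k, ω i * φ i p.1 * φ i p.2) ^ 2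
              ∂(unifMeasure.prod unifMeasure) := by
        rw [← (unif_pair_mp n huv).map_eq,
          integral_map ((measurable_pi_apply u).prodMk (measurable_pi_apply v)).aemeasurable
            (by rw [(unif_pair_mp n huv).map_eq]; exact hoff_int.aestronglyMeasurable)]
      rw [heq2]
      exact hoff_le
  -- split the integral of the double sum
  rw [integral_finset_sum _ (fun u _ => integrable_finset_sum _ (fun v _ => hterm_int u v))]
  have hsplit : ∀ u : Fin n, (∫ ξ, (∑ v,
      ((if u = v then (0:ℝ) else W (ξ u) (ξ v))
        - ∑ i ∈ Finset.range k, ω i * φ i (ξ u) * φ i (ξ v)) ^ 2) ∂π)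
      = ∑ v, ∫ ξ,
        ((if u = v then (0:ℝ) else W (ξ u) (ξ v))
          - ∑ i ∈ Finset.range k, ω i * φ i (ξ u) * φ i (ξ v)) ^ 2 ∂π :=
    fun u => integral_finset_sum _ (fun v _ => hterm_int u v)
  rw [Finset.sum_congr rfl fun u _ => hsplit u]
  have hrow : ∀ u : Fin n, (∑ v, ∫ ξ,
      ((if u = v then (0:ℝ) else W (ξ u) (ξ v))
        - ∑ i ∈ Finset.range k, ω i * φ i (ξ u) * φ i (ξ v)) ^ 2 ∂π)
      ≤ Co * n + (Cd - Co) := by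
    intro u
    have h1 : (∑ v, ∫ ξ,
        ((if u = v then (0:ℝ) else W (ξ u) (ξ v))
          - ∑ i ∈ Finset.range k, ω i * φ i (ξ u) * φ i (ξ v)) ^ 2 ∂π)
        ≤ ∑ v : Fin n, if u = v then Cd else Co :=
      Finset.sum_le_sum fun v _ => hterm_le u v
    refine h1.trans (le_of_eq ?_)
    have h2 : ∀ v : Fin n, (if u = v then Cd else Co)
        = Co + (if u = v then Cd - Co else 0) := by
      intro v; split <;> ring
    simp only [h2]
    rw [Finset.sum_add_distrib, Finset.sum_const, Finset.card_univ, Fintype.card_fin,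
      Finset.sum_ite_eq, if_pos (Finset.mem_univ u)]
    push_cast
    ring
  calc (∑ u : Fin n, ∑ v, ∫ ξ,
      ((if u = v then (0:ℝ) else W (ξ u) (ξ v))
        - ∑ i ∈ Finset.range k, ω i * φ i (ξ u) * φ i (ξ v)) ^ 2 ∂π)
      ≤ ∑ _u : Fin n, (Co * n + (Cd - Co)) := Finset.sum_le_sum fun u _ => hrow u
    _ = n * (Co * n + (Cd - Co)) := by
        rw [Finset.sum_const, Finset.card_univ, Fintype.card_fin]
        push_cast; ring
    _ ≤ 2 * (n : ℝ) ^ 2 * (∑' i : {i : ℕ // k ≤ i}, (ω i) ^ 2)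
        + n * (2 * (∑' i, |ω i|) + 2 * B ^ 2) := by
      have hCoEq : 2 * (n:ℝ) ^ 2 * (∑' i : {i : ℕ // k ≤ i}, (ω i) ^ 2)
          = (n:ℝ) ^ 2 * Co := by rw [hCo]; ring
      rw [hCoEq, ← hCd]
      have hn : (0:ℝ) ≤ n := Nat.cast_nonneg n
      nlinarith [mul_nonneg hn hCo0, hCo0, hn]
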